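/- Orient the edges of a graph G along a Hamiltonian path v₁,…,v_n by directing each edge from the vertex with smaller index to the vertex with larger index. In the resulting orientation, for each vertex the number of vertices reachable by a directed path is distinct, and hence the orientation has no non-trivial automorphism. -/

import Mathlib

/-- An orientation of a simple graph `G`: a choice of exactly one direction for each edge. -/
structure GraphOrientation {V : Type*} (G : SimpleGraph V) where
  A : V → V → Prop
  consistent : ∀ u v, G.Adj u v ↔ A u v ∨ A v u
  asymm : ∀ u v, A u v → ¬ A v u

/-- `φ` is an automorphism of the graph `G`. -/
def IsGraphAut {V : Type*} (G : SimpleGraph V) (φ : Equiv.Perm V) : Prop :=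
  ∀ u v, G.Adj (φ u) (φ v) ↔ G.Adj u v

/-- `φ` is an automorphism of the digraph with arc relation `A`. -/
def IsDigraphAut {V : Type*} (A : V → V → Prop) (φ : Equiv.Perm V) : Prop :=
  ∀ u v, A (φ u) (φ v) ↔ A u v

/-- An edge colouring `c` of `G` is distinguishing if the only automorphism
preserving it is the identity. -/
def IsDistEdgeCol {V : Type*} (G : SimpleGraph V) {C : Type*} (c : Sym2 V → C) : Prop :=
  ∀ φ : Equiv.Perm V, IsGraphAut G φ →
    (∀ e ∈ G.edgeSet, c (Sym2.map φ e) = c e) → φ = 1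

/-- The distinguishing index `D'(G)` of a graph. -/
noncomputable def D' {V : Type*} (G : SimpleGraph V) : ℕ :=
  sInf {k | ∃ c : Sym2 V → Fin k, IsDistEdgeCol G c}

/-- An arc colouring `c` of the digraph with arc relation `A` is distinguishing if
the only automorphism preserving it is the identity. -/
def IsDistArcCol {V : Type*} (A : V → V → Prop) {C : Type*} (c : V → V → C) : Prop :=
  ∀ φ : Equiv.Perm V, IsDigraphAut A φ →
    (∀ u v, A u v → c (φ u) (φ v) = c u v) → φ = 1

/-- The distinguishing index of a digraph with arc relation `A`. -/
noncomputable def Dd' {V : Type*} (A : V → V → Prop) : ℕ :=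
  sInf {k | ∃ c : V → V → Fin k, IsDistArcCol A c}

/-- `OD'⁻(G)`: minimum of the distinguishing index over all orientations of `G`. -/
noncomputable def ODminus {V : Type*} (G : SimpleGraph V) : ℕ :=
  sInf {n | ∃ O : GraphOrientation G, Dd' O.A = n}

/-- `OD'⁺(G)`: maximum of the distinguishing index over all orientations of `G`. -/
noncomputable def ODplus {V : Type*} (G : SimpleGraph V) : ℕ :=
  sSup {n | ∃ O : GraphOrientation G, Dd' O.A = n}

/-- `G` is claw-free: no induced `K_{1,3}`. -/
def ClawFree {V : Type*} (G : SimpleGraph V) : Prop :=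
  ∀ x a b c : V, G.Adj x a → G.Adj x b → G.Adj x c →
    a ≠ b → a ≠ c → b ≠ c → (G.Adj a b ∨ G.Adj a c ∨ G.Adj b c)

/-- `G` is traceable: it has a Hamiltonian path. -/
def Traceable {V : Type*} [DecidableEq V] (G : SimpleGraph V) : Prop :=
  ∃ (u v : V) (p : G.Walk u v), p.IsHamiltonian

/-- `H` is empty or has a Hamiltonian path (i.e. admits a path cover by one path). -/
def TraceableOrEmpty {W : Type*} [DecidableEq W] (H : SimpleGraph W) : Prop :=
  IsEmpty W ∨ ∃ (u v : W) (p : H.Walk u v), p.IsHamiltonian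

/-- `φ` is a twisted automorphism: some power of `φ` swaps the ends of an edge. -/
def Twisted {V : Type*} (G : SimpleGraph V) (φ : Equiv.Perm V) : Prop :=
  ∃ (n : ℕ) (u v : V), 1 ≤ n ∧ G.Adj u v ∧ (φ ^ n) u = v ∧ (φ ^ n) v = u

/-- `H` has no cut-vertex. -/
def NoCutVtx {W : Type*} (H : SimpleGraph W) : Prop :=
  ∀ v : W, (H.induce {u | u ≠ v}).Preconnected

theorem stmt8 {V : Type*} [Fintype V] (G : SimpleGraph V) {n : ℕ} (e : Fin n ≃ V)
    (hpath : ∀ i j : Fin n, (j : ℕ) = (i : ℕ) + 1 → G.Adj (e i) (e j))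
    (O : GraphOrientation G)
    (hO : ∀ x y, O.A x y ↔ G.Adj x y ∧ e.symm x < e.symm y) :
    (Function.Injective fun x : V => {z | Relation.ReflTransGen O.A x z}.ncard) ∧
      ∀ φ : Equiv.Perm V, IsDigraphAut O.A φ → φ = 1 := by
  set R := Relation.ReflTransGen O.A with hR
  have hAlt : ∀ x y, O.A x y → e.symm x < e.symm y := fun x y h => ((hO x y).1 h).2
  have hRle : ∀ x z, R x z → e.symm x ≤ e.symm z := by
    intro x z h
    induction h with
    | refl => exact le_refl _
    | tail _ h ih => exact ih.trans (hAlt _ _ h).le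
  have key : ∀ k : ℕ, ∀ i j : Fin n, (j : ℕ) = (i : ℕ) + k → R (e i) (e j) := by
    intro k
    induction k with
    | zero =>
      intro i j h
      have : i = j := Fin.ext (by omega)
      subst this
      exact Relation.ReflTransGen.refl
    | succ k ih =>
      intro i j h
      have hm : (i : ℕ) + k < n := by omega
      set m : Fin n := ⟨(i : ℕ) + k, hm⟩ with hmdef
      have h1 : R (e i) (e m) := ih i m rfl
      have hadj : G.Adj (e m) (e j) := hpath m j (by simp [hmdef]; omega)
      have hA : O.A (e m) (e j) := (hO _ _).2 ⟨hadj, by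
        simp only [Equiv.symm_apply_apply]
        rw [Fin.lt_def]
        simp [hmdef]; omega⟩
      exact h1.tail hA
  have hRge : ∀ x z, e.symm x ≤ e.symm z → R x z := by
    intro x z h
    have := key ((e.symm z : ℕ) - (e.symm x : ℕ)) (e.symm x) (e.symm z)
      (by rw [Fin.le_def] at h; omega)
    simpa using this
  -- strict monotonicity of reach sets
  have hsub : ∀ x y : V, e.symm x < e.symm y →
      {z | R y z}.ncard < {z | R x z}.ncard := by
    intro x y hlt
    apply Set.ncard_lt_ncard
    · constructor
      · intro z hz
        exact hRge x z ((hRle y z hz).trans' hlt.le)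
      · intro hcontra
        have hx : x ∈ {z | R x z} := Relation.ReflTransGen.refl
        have := hRle y x (hcontra hx)
        exact absurd hlt (not_lt.2 this)
    · exact Set.toFinite _
  have hinj : Function.Injective fun x : V => {z | Relation.ReflTransGen O.A x z}.ncard := by
    intro x y h
    simp only at h
    by_contra hne
    have hne' : e.symm x ≠ e.symm y := fun hc => hne (by
      have := congrArg e hc; simpa using this)
    rcases lt_or_gt_of_ne hne' with hlt | hlt
    · exact absurd h (ne_of_gt (hsub x y hlt))
    · exact absurd h (ne_of_lt (hsub y x hlt))
  refine ⟨hinj, ?_⟩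
  intro φ hφ
  have map : ∀ (ψ : Equiv.Perm V), IsDigraphAut O.A ψ → ∀ x z, R x z → R (ψ x) (ψ z) := by
    intro ψ hψ x z h
    induction h with
    | refl => exact Relation.ReflTransGen.refl
    | tail _ h ih => exact ih.tail ((hψ _ _).2 h)
  have himg : ∀ x, {z | R (φ x) z} = φ '' {z | R x z} := by
    intro x
    ext w
    constructor
    · intro hw
      have hinv : IsDigraphAut O.A φ⁻¹ := by
        intro u v
        rw [← hφ (φ⁻¹ u) (φ⁻¹ v)]
        simp
      have h2 := map φ⁻¹ hinv _ _ hw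
      simp only [Equiv.Perm.coe_inv, Equiv.symm_apply_apply] at h2
      exact ⟨φ⁻¹ w, h2, by simp⟩
    · rintro ⟨z, hz, rfl⟩
      exact map φ hφ _ _ hz
  have hcard : ∀ x, {z | R (φ x) z}.ncard = {z | R x z}.ncard := by
    intro x
    rw [himg, Set.ncard_image_of_injective _ φ.injective]
  ext x
  have := hinj (hcard x)
  simpa using this
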